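/- Let H be an RKHS with kernel k on a compact set X, with S the ball of radius R in H, and let S_t^∥, S_t^⊥ be as in the orthogonal decomposition at sample points x₁,…,x_t. Then for any ε^∥ > 0 and ε^⊥ > 0, the packing number of S_t^⊥ restricted to X at scale ε^⊥ in the sup-norm is at least N(S(X), ε^∥ + ε^⊥, ‖·‖_∞) / N(S_t^∥(X), ε^∥, ‖·‖_∞), where N denotes covering number in the sup-norm over X. -/

import Mathlib

open scoped RealInnerProductSpace ENNReal

/-- Sup-norm covering number over `X` of a family `F` of real-valued functions:
minimal cardinality of a finite set `C` such that every `f ∈ F` is within `ε` of some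
`c ∈ C` uniformly on `X`. -/
noncomputable def covN {D : Type*} (X : Set D) (F : Set (D → ℝ)) (ε : ℝ) : ℝ≥0∞ :=
  ⨅ (C : Finset (D → ℝ)) (_ : ∀ f ∈ F, ∃ c ∈ C, ∀ x ∈ X, |f x - c x| ≤ ε),
    (C.card : ℝ≥0∞)

/-- Sup-norm packing number over `X` of a family `F` of real-valued functions:
maximal cardinality of a finite subset of `F` whose members are pairwise more than `ε`
apart in sup-norm over `X`. -/
noncomputable def packN {D : Type*} (X : Set D) (F : Set (D → ℝ)) (ε : ℝ) : ℝ≥0∞ :=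
  ⨆ (P : Finset (D → ℝ))
    (_ : ↑P ⊆ F ∧ ∀ p ∈ P, ∀ q ∈ P, p ≠ q → ∃ x ∈ X, ε < |p x - q x|),
    (P.card : ℝ≥0∞)

/-- Decomposition of covering numbers: with `S` the RKHS ball of radius `R`,
`S_t^∥ = S ∩ span{K (x i)}`, `S_t^⊥ = S ∩ {f | f(x i) = 0 ∀ i}`, and `Q(X)` the set of
restrictions (here: evaluation functions `p ↦ ⟪f, K p⟫`), for any `ε^∥, ε^⊥ > 0`,
`M(S_t^⊥(X), ε^⊥) ≥ N(S(X), ε^∥ + ε^⊥) / N(S_t^∥(X), ε^∥)`. -/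
theorem packing_perp_ge_covering_ratio {H : Type*} [NormedAddCommGroup H]
    [InnerProductSpace ℝ H] [CompleteSpace H] {d t : ℕ}
    (K : (Fin d → ℝ) → H) (X : Set (Fin d → ℝ)) (hX : IsCompact X)
    (x : Fin t → (Fin d → ℝ)) (R : ℝ) (hR : 0 < R)
    (εpar εperp : ℝ) (hpar : 0 < εpar) (hperp : 0 < εperp) :
    covN X ((fun f : H => fun p => ⟪f, K p⟫) '' {f : H | ‖f‖ ≤ R}) (εpar + εperp) /
        covN X ((fun f : H => fun p => ⟪f, K p⟫) ''
          ({f : H | ‖f‖ ≤ R} ∩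
            (Submodule.span ℝ (Set.range fun i => K (x i)) : Set H))) εpar ≤
      packN X ((fun f : H => fun p => ⟪f, K p⟫) ''
        ({f : H | ‖f‖ ≤ R} ∩ {f : H | ∀ i, ⟪f, K (x i)⟫ = 0})) εperp := by
  classical
  set ev : H → (Fin d → ℝ) → ℝ := fun f => fun p => ⟪f, K p⟫ with hev
  set V : Submodule ℝ H := Submodule.span ℝ (Set.range fun i => K (x i)) with hV
  haveI : FiniteDimensional ℝ V := FiniteDimensional.span_of_finite ℝ (Set.finite_range _)
  set Fall : Set ((Fin d → ℝ) → ℝ) := ev '' {f : H | ‖f‖ ≤ R} with hFall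
  set Fpar : Set ((Fin d → ℝ) → ℝ) := ev '' ({f : H | ‖f‖ ≤ R} ∩ (V : Set H)) with hFpar
  set Fperp : Set ((Fin d → ℝ) → ℝ) :=
    ev '' ({f : H | ‖f‖ ≤ R} ∩ {f : H | ∀ i, ⟪f, K (x i)⟫ = 0}) with hFperp
  set CovP : Set ((Fin d → ℝ) → ℝ) → ℝ → Finset ((Fin d → ℝ) → ℝ) → Prop :=
    fun F ε C => ∀ f ∈ F, ∃ c ∈ C, ∀ y ∈ X, |f y - c y| ≤ ε with hCovP
  set PkP : Finset ((Fin d → ℝ) → ℝ) → Prop :=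
    fun P => ↑P ⊆ Fperp ∧ ∀ p ∈ P, ∀ q ∈ P, p ≠ q → ∃ y ∈ X, εperp < |p y - q y| with hPkP
  have hcovN : ∀ (F : Set ((Fin d → ℝ) → ℝ)) (ε : ℝ),
      covN X F ε = ⨅ (C : Finset ((Fin d → ℝ) → ℝ)) (_ : CovP F ε C), (C.card : ℝ≥0∞) :=
    fun F ε => rfl
  have hpackN : packN X Fperp εperp = ⨆ (P : Finset ((Fin d → ℝ) → ℝ)) (_ : PkP P),
      (P.card : ℝ≥0∞) := rfl
  by_cases hM : packN X Fperp εperp = ⊤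
  · rw [hM]; exact le_top
  by_cases hb : covN X Fpar εpar = ⊤
  · rw [hb, ENNReal.div_top]; exact zero_le
  -- a minimal cover C₀ of Fpar
  have hexC : ∃ C : Finset ((Fin d → ℝ) → ℝ), CovP Fpar εpar C := by
    by_contra h
    push_neg at h
    exact hb (by rw [hcovN]; simp [iInf_neg, h])
  have hexCn : ∃ n : ℕ, ∃ C : Finset ((Fin d → ℝ) → ℝ), CovP Fpar εpar C ∧ C.card = n := by
    obtain ⟨C, hC⟩ := hexC; exact ⟨C.card, C, hC, rfl⟩
  obtain ⟨C₀, hC₀, hC₀card⟩ := Nat.find_spec hexCn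
  have hC₀min : (C₀.card : ℝ≥0∞) ≤ covN X Fpar εpar := by
    rw [hcovN]
    refine le_iInf fun C => le_iInf fun hC => ?_
    have : Nat.find hexCn ≤ C.card := Nat.find_min' hexCn ⟨C, hC, rfl⟩
    exact_mod_cast hC₀card ▸ this
  -- a maximal packing P₀ of Fperp
  obtain ⟨N, hN⟩ := ENNReal.exists_nat_gt hM
  have hPle : ∀ P : Finset ((Fin d → ℝ) → ℝ), PkP P → (P.card : ℝ≥0∞) ≤ packN X Fperp εperp :=
    fun P hP => by rw [hpackN]; exact le_iSup_of_le P (le_iSup_of_le hP le_rfl)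
  have hPk0 : PkP (∅ : Finset ((Fin d → ℝ) → ℝ)) := by
    constructor
    · simp
    · intro p hp; simp at hp
  set Pkn : ℕ → Prop := fun n => ∃ P : Finset ((Fin d → ℝ) → ℝ), PkP P ∧ P.card = n with hPkn
  have h0N : (0 : ℕ) ≤ N := Nat.zero_le N
  have hPkn0 : Pkn 0 := ⟨∅, hPk0, rfl⟩
  obtain ⟨P₀, hP₀, hP₀card⟩ := Nat.findGreatest_spec h0N hPkn0
  -- P₀ is a cover of Fperp at scale εperp (by maximality)
  have hPcov : ∀ g ∈ Fperp, ∃ p ∈ P₀, ∀ y ∈ X, |g y - p y| ≤ εperp := by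
    intro g hg
    by_contra hcon
    push_neg at hcon
    have hgP : g ∉ P₀ := by
      intro hgmem
      obtain ⟨y, _, hlt⟩ := hcon g hgmem
      simp at hlt; linarith
    have hins : PkP (insert g P₀) := by
      constructor
      · rw [Finset.coe_insert]
        exact Set.insert_subset hg hP₀.1
      · intro p hp q hq hpq
        rcases Finset.mem_insert.mp hp with rfl | hp' <;>
          rcases Finset.mem_insert.mp hq with rfl | hq'
        · exact absurd rfl hpq
        · exact hcon q hq'
        · obtain ⟨y, hy, h⟩ := hcon p hp'
          exact ⟨y, hy, by rwa [abs_sub_comm] at h⟩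
        · exact hP₀.2 p hp' q hq' hpq
    have hcard : (insert g P₀).card = P₀.card + 1 := Finset.card_insert_of_notMem hgP
    have hle : ((insert g P₀).card : ℝ≥0∞) ≤ packN X Fperp εperp := hPle _ hins
    have hltN : (insert g P₀).card ≤ N := by
      have : ((insert g P₀).card : ℝ≥0∞) < N := lt_of_le_of_lt hle hN
      exact_mod_cast this.le
    have hPknins : Pkn (insert g P₀).card := by
      rw [hPkn]; exact ⟨insert g P₀, hins, rfl⟩
    have := Nat.le_findGreatest hltN hPknins
    rw [hcard, hP₀card] at this
    omega
  -- the sum family covers Fall at scale εpar + εperp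
  set D : Finset ((Fin d → ℝ) → ℝ) := (C₀ ×ˢ P₀).image fun cp => cp.1 + cp.2 with hD
  have hDcov : CovP Fall (εpar + εperp) D := by
    rintro _ ⟨f, hf, rfl⟩
    set m : H := (V.orthogonalProjectionOnto f : H) with hm
    have hmV : m ∈ V := (V.orthogonalProjectionOnto f).2
    set g : H := f - m with hg
    have hgperp : g ∈ Vᗮ := Submodule.sub_starProjection_mem_orthogonal f
    have hinner : ⟪m, g⟫ = 0 := (Submodule.mem_orthogonal V g).mp hgperp m hmV
    have hfmg : f = m + g := by rw [hg]; abel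
    have hnorm : ‖f‖ ^ 2 = ‖m‖ ^ 2 + ‖g‖ ^ 2 := by
      conv_lhs => rw [hfmg]
      rw [norm_add_sq_real, hinner]; ring
    have hfR : ‖f‖ ≤ R := hf
    have hm2 : ‖m‖ ^ 2 ≤ ‖f‖ ^ 2 := by
      rw [hnorm]; linarith [sq_nonneg ‖g‖]
    have hg2 : ‖g‖ ^ 2 ≤ ‖f‖ ^ 2 := by
      rw [hnorm]; linarith [sq_nonneg ‖m‖]
    have hmR : ‖m‖ ≤ R :=
      le_trans ((pow_le_pow_iff_left₀ (norm_nonneg m) (norm_nonneg f) two_ne_zero).mp hm2) hfR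
    have hgR : ‖g‖ ≤ R :=
      le_trans ((pow_le_pow_iff_left₀ (norm_nonneg g) (norm_nonneg f) two_ne_zero).mp hg2) hfR
    have hgzero : ∀ i, ⟪g, K (x i)⟫ = 0 := by
      intro i
      have hKV : K (x i) ∈ V := Submodule.subset_span ⟨i, rfl⟩
      rw [real_inner_comm]
      exact (Submodule.mem_orthogonal V g).mp hgperp _ hKV
    obtain ⟨c, hcC, hc⟩ := hC₀ (ev m) ⟨m, ⟨hmR, hmV⟩, rfl⟩
    obtain ⟨p, hpP, hp⟩ := hPcov (ev g) ⟨g, ⟨hgR, hgzero⟩, rfl⟩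
    refine ⟨c + p, Finset.mem_image.mpr ⟨(c, p), Finset.mem_product.mpr ⟨hcC, hpP⟩, rfl⟩, ?_⟩
    intro y hy
    have heval : ev f y = ev m y + ev g y := by
      show ⟪f, K y⟫ = ⟪m, K y⟫ + ⟪g, K y⟫
      rw [← inner_add_left, ← hfmg]
    have h1 := hc y hy
    have h2 := hp y hy
    have hcp : (c + p) y = c y + p y := rfl
    have : ev f y - (c + p) y = (ev m y - c y) + (ev g y - p y) := by
      rw [heval, hcp]; ring
    rw [this]
    calc |(ev m y - c y) + (ev g y - p y)| ≤ |ev m y - c y| + |ev g y - p y| := abs_add_le _ _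
      _ ≤ εpar + εperp := add_le_add h1 h2
  have hcovD : covN X Fall (εpar + εperp) ≤ (D.card : ℝ≥0∞) := by
    rw [hcovN]
    exact iInf_le_of_le D (iInf_le_of_le hDcov le_rfl)
  have hDcard : (D.card : ℝ≥0∞) ≤ (C₀.card : ℝ≥0∞) * (P₀.card : ℝ≥0∞) := by
    have : D.card ≤ C₀.card * P₀.card := by
      calc D.card ≤ (C₀ ×ˢ P₀).card := Finset.card_image_le
        _ = C₀.card * P₀.card := Finset.card_product _ _
    exact_mod_cast this
  have hmain : covN X Fall (εpar + εperp) ≤ packN X Fperp εperp * covN X Fpar εpar := by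
    calc covN X Fall (εpar + εperp) ≤ (D.card : ℝ≥0∞) := hcovD
      _ ≤ (C₀.card : ℝ≥0∞) * (P₀.card : ℝ≥0∞) := hDcard
      _ ≤ covN X Fpar εpar * packN X Fperp εperp :=
          mul_le_mul' hC₀min (hPle P₀ hP₀)
      _ = packN X Fperp εperp * covN X Fpar εpar := mul_comm _ _
  exact ENNReal.div_le_of_le_mul hmain
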